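/- Let z ∈ ℝ^n. Then C_{2n}^II (z^T, 0^T)^T, after even-odd permutation, equals (1/√2)((C_n^II z)^T, (C_n^IV z)^T)^T; that is, the even-indexed entries of the DCT-II of (z,0) are (1/√2) C_n^II z and the odd-indexed entries are (1/√2) C_n^IV z. -/

import Mathlib

open Matrix

/-- The cosine matrix of type II of size `n`. -/
noncomputable def CII (n : ℕ) : Matrix (Fin n) (Fin n) ℝ :=
  Matrix.of fun k l : Fin n =>
    Real.sqrt (2 / (n : ℝ)) * (if (k : ℕ) % n = 0 then 1 / Real.sqrt 2 else 1) *
      Real.cos ((k : ℕ) * (2 * (l : ℕ) + 1) * Real.pi / (2 * (n : ℝ)))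

/-- The cosine matrix of type IV of size `n`. -/
noncomputable def CIV (n : ℕ) : Matrix (Fin n) (Fin n) ℝ :=
  Matrix.of fun k l : Fin n =>
    Real.sqrt (2 / (n : ℝ)) *
      Real.cos ((2 * (k : ℕ) + 1) * (2 * (l : ℕ) + 1) * Real.pi / (4 * (n : ℝ)))

lemma pad_sum (n : ℕ) (z : Fin n → ℝ) (f : ℕ → ℝ) :
    (∑ i : Fin (2 * n), f i * (if h : (i : ℕ) < n then z ⟨(i : ℕ), h⟩ else 0)) =
      ∑ i : Fin n, f i * z i := by
  rw [Fin.sum_univ_eq_sum_range (fun m => f m * (if h : m < n then z ⟨m, h⟩ else 0)) (2 * n)]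
  rw [two_mul, Finset.sum_range_add]
  have h2 : (∑ x ∈ Finset.range n,
      (fun m => f m * (if h : m < n then z ⟨m, h⟩ else 0)) (n + x)) = 0 := by
    apply Finset.sum_eq_zero
    intro x _
    simp only
    rw [dif_neg (by omega)]
    ring
  rw [h2, add_zero]
  rw [← Fin.sum_univ_eq_sum_range (fun m => f m * (if h : m < n then z ⟨m, h⟩ else 0)) n]
  apply Finset.sum_congr rfl
  intro i _
  simp [i.isLt]

lemma sqrt_half (n : ℕ) : Real.sqrt (2 / ((2 * n : ℕ) : ℝ)) =
    1 / Real.sqrt 2 * Real.sqrt (2 / (n : ℝ)) := by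
  push_cast
  rw [show (2 : ℝ) / (2 * n) = (1 / 2) * (2 / n) by ring]
  rw [Real.sqrt_mul (by norm_num), one_div, Real.sqrt_inv, one_div]

theorem dctII_of_zero_padded (n : ℕ) (z : Fin n → ℝ) (k : Fin n) :
    (CII (2 * n)).mulVec
        (fun i : Fin (2 * n) => if h : (i : ℕ) < n then z ⟨(i : ℕ), h⟩ else 0)
        ⟨2 * (k : ℕ), by have := k.isLt; omega⟩ =
      (1 / Real.sqrt 2) * (CII n).mulVec z k ∧
    (CII (2 * n)).mulVec
        (fun i : Fin (2 * n) => if h : (i : ℕ) < n then z ⟨(i : ℕ), h⟩ else 0)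
        ⟨2 * (k : ℕ) + 1, by have := k.isLt; omega⟩ =
      (1 / Real.sqrt 2) * (CIV n).mulVec z k := by
  have hk := k.isLt
  have hn : 0 < n := k.pos
  have hnR : (n : ℝ) ≠ 0 := by positivity
  constructor
  · simp only [Matrix.mulVec, dotProduct, CII, Matrix.of_apply]
    rw [pad_sum n z (fun m => Real.sqrt (2 / ((2 * n : ℕ) : ℝ)) *
      (if (2 * (k : ℕ)) % (2 * n) = 0 then 1 / Real.sqrt 2 else 1) *
      Real.cos ((2 * (k : ℕ) : ℕ) * (2 * (m : ℕ) + 1) * Real.pi / (2 * ((2 * n : ℕ) : ℝ))))]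
    rw [Finset.mul_sum]
    apply Finset.sum_congr rfl
    intro i _
    have e1 : (2 * (k : ℕ)) % (2 * n) = 0 ↔ (k : ℕ) % n = 0 := by
      rw [Nat.mod_eq_of_lt (by omega), Nat.mod_eq_of_lt hk]
      omega
    have e2 : ((2 * (k : ℕ) : ℕ) : ℝ) * (2 * (i : ℕ) + 1) * Real.pi / (2 * ((2 * n : ℕ) : ℝ))
        = (k : ℕ) * (2 * (i : ℕ) + 1) * Real.pi / (2 * (n : ℝ)) := by
      push_cast
      field_simp
    rw [e2, sqrt_half n]
    by_cases hk0 : (k : ℕ) % n = 0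
    · rw [if_pos (e1.mpr hk0), if_pos hk0]; ring
    · rw [if_neg (fun h => hk0 (e1.mp h)), if_neg hk0]; ring
  · simp only [Matrix.mulVec, dotProduct, CII, CIV, Matrix.of_apply]
    rw [pad_sum n z (fun m => Real.sqrt (2 / ((2 * n : ℕ) : ℝ)) *
      (if (2 * (k : ℕ) + 1) % (2 * n) = 0 then 1 / Real.sqrt 2 else 1) *
      Real.cos (((2 * (k : ℕ) + 1 : ℕ) : ℝ) * (2 * (m : ℕ) + 1) * Real.pi / (2 * ((2 * n : ℕ) : ℝ))))]
    rw [Finset.mul_sum]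
    apply Finset.sum_congr rfl
    intro i _
    have e1 : (2 * (k : ℕ) + 1) % (2 * n) ≠ 0 := by
      rw [Nat.mod_eq_of_lt (by omega)]; omega
    have e2 : ((2 * (k : ℕ) + 1 : ℕ) : ℝ) * (2 * (i : ℕ) + 1) * Real.pi / (2 * ((2 * n : ℕ) : ℝ))
        = (2 * (k : ℕ) + 1) * (2 * (i : ℕ) + 1) * Real.pi / (4 * (n : ℝ)) := by
      push_cast
      field_simp
      ring
    rw [e2, sqrt_half n, if_neg e1]
    ring
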